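/- Let Ω be a finite subset of ℝ^n, let q : Ω → ℝ_{≥0} be a probability mass function, and for θ ∈ ℝ^n define F(θ) = sup_{x ∈ ℝ^n} (θ·x - log Σ_{ω∈Ω} e^{x·ω} q_ω). Then F(θ) = min { D_KL(p‖q) : p a probability mass function on Ω with Σ_ω p_ω ω = θ }, where the minimum is over probability distributions p on Ω with mean θ (and F(θ) = +∞ if no such p with p absolutely continuous w.r.t. q exists). -/

import Mathlib

open scoped BigOperators



private lemma ereal_coe_sum {α : Type*} (s : Finset α) (f : α → ℝ) :
    ((∑ i ∈ s, f i : ℝ) : EReal) = ∑ i ∈ s, ((f i : ℝ) : EReal) := by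
  induction s using Finset.cons_induction with
  | empty => simp
  | cons a s ha ih => rw [Finset.sum_cons, Finset.sum_cons, EReal.coe_add, ih]

private lemma ereal_sum_ne_bot {α : Type*} (s : Finset α) (f : α → EReal)
    (h : ∀ i ∈ s, f i ≠ ⊥) : ∑ i ∈ s, f i ≠ ⊥ := by
  induction s using Finset.cons_induction with
  | empty => simp
  | cons a s ha ih =>
    rw [Finset.sum_cons]
    rw [Ne, EReal.add_eq_bot_iff]
    push_neg
    exact ⟨h a (Finset.mem_cons_self a s), ih fun i hi => h i (Finset.mem_cons_of_mem hi)⟩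

/-- Kullback–Leibler divergence of two pmfs on a finite set `Ω ⊆ ℝ^n`, with values in the
extended reals: the conventions are `0 log 0 = 0` and `p_ω log(p_ω/0) = +∞` for `p_ω > 0`. -/
noncomputable def klDiv {n : ℕ} (Ω : Finset (Fin n → ℝ)) (p q : (Fin n → ℝ) → ℝ) : EReal :=
  ∑ ω ∈ Ω, (if p ω = 0 then (0 : EReal) else
    if q ω = 0 then (⊤ : EReal) else ((p ω * Real.log (p ω / q ω) : ℝ) : EReal))

private lemma klDiv_eq_coe {n : ℕ} {Ω : Finset (Fin n → ℝ)} {p q : (Fin n → ℝ) → ℝ}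
    (habs : ∀ ω ∈ Ω, q ω = 0 → p ω = 0) :
    klDiv Ω p q = ((∑ ω ∈ Ω, p ω * Real.log (p ω / q ω) : ℝ) : EReal) := by
  rw [klDiv, ereal_coe_sum]
  refine Finset.sum_congr rfl fun ω hω => ?_
  by_cases hp : p ω = 0
  · simp [hp]
  · rw [if_neg hp, if_neg (fun hq => hp (habs ω hω hq))]

private lemma klDiv_eq_top {n : ℕ} {Ω : Finset (Fin n → ℝ)} {p q : (Fin n → ℝ) → ℝ}
    (ω₀ : Fin n → ℝ) (hω₀ : ω₀ ∈ Ω) (hq : q ω₀ = 0) (hp : p ω₀ ≠ 0) :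
    klDiv Ω p q = ⊤ := by
  rw [klDiv, ← Finset.add_sum_erase _ _ hω₀, if_neg hp, if_pos hq]
  apply EReal.top_add_of_ne_bot
  apply ereal_sum_ne_bot
  intro i hi
  split_ifs with h1 h2
  · simp
  · simp
  · exact EReal.coe_ne_bot _



private lemma sum_theta_dot {n : ℕ} {Ω : Finset (Fin n → ℝ)} {p : (Fin n → ℝ) → ℝ}
    {θ : Fin n → ℝ} (hpmean : ∑ ω ∈ Ω, p ω • ω = θ) (x : Fin n → ℝ) :
    ∑ j, θ j * x j = ∑ ω ∈ Ω, p ω * ∑ j, x j * ω j := by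
  have hθj : ∀ j, θ j = ∑ ω ∈ Ω, p ω * ω j := by
    intro j
    rw [← hpmean, Finset.sum_apply]
    simp
  calc ∑ j, θ j * x j = ∑ j, ∑ ω ∈ Ω, p ω * ω j * x j := by
        refine Finset.sum_congr rfl fun j _ => ?_
        rw [hθj j, Finset.sum_mul]
    _ = ∑ ω ∈ Ω, ∑ j, p ω * ω j * x j := Finset.sum_comm
    _ = ∑ ω ∈ Ω, p ω * ∑ j, x j * ω j := by
        refine Finset.sum_congr rfl fun ω _ => ?_
        rw [Finset.mul_sum]
        exact Finset.sum_congr rfl fun j _ => by ring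

/-- Gibbs' inequality. -/
private lemma gibbs {n : ℕ} (Ω : Finset (Fin n → ℝ)) (p q : (Fin n → ℝ) → ℝ)
    (hp0 : ∀ ω, 0 ≤ p ω) (hq0 : ∀ ω, 0 ≤ q ω) (hp1 : ∑ ω ∈ Ω, p ω = 1)
    (habs : ∀ ω ∈ Ω, q ω = 0 → p ω = 0) (x : Fin n → ℝ) :
    ∑ ω ∈ Ω, p ω * ∑ j, x j * ω j
        - Real.log (∑ ω ∈ Ω, Real.exp (∑ j, x j * ω j) * q ω)
      ≤ ∑ ω ∈ Ω, p ω * Real.log (p ω / q ω) := by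
  classical
  set t := Ω.filter (fun ω => p ω ≠ 0) with ht
  have hpt : ∀ ω ∈ t, 0 < p ω := by
    intro ω hω
    exact lt_of_le_of_ne (hp0 ω) (Ne.symm (Finset.mem_filter.1 hω).2)
  have hqt : ∀ ω ∈ t, 0 < q ω := by
    intro ω hω
    obtain ⟨hΩ, hp⟩ := Finset.mem_filter.1 hω
    refine lt_of_le_of_ne (hq0 ω) fun h => hp (habs ω hΩ h.symm)
  have hsum_t : ∑ ω ∈ t, p ω = 1 := by
    rw [ht, Finset.sum_filter_ne_zero, hp1]
  have htne : t.Nonempty := by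
    by_contra h
    rw [Finset.not_nonempty_iff_eq_empty] at h
    rw [h, Finset.sum_empty] at hsum_t
    norm_num at hsum_t
  -- Jensen
  set z : (Fin n → ℝ) → ℝ := fun ω => Real.exp (∑ j, x j * ω j) * (q ω / p ω) with hz
  have hzpos : ∀ ω ∈ t, z ω ∈ Set.Ioi (0:ℝ) := by
    intro ω hω
    exact mul_pos (Real.exp_pos _) (div_pos (hqt ω hω) (hpt ω hω))
  have hjensen := (strictConcaveOn_log_Ioi.concaveOn).le_map_sum
    (t := t) (w := p) (p := z) (fun ω hω => (hpt ω hω).le) hsum_t hzpos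
  -- rewrite LHS of Jensen
  have hlogz : ∀ ω ∈ t, Real.log (z ω)
      = ∑ j, x j * ω j - Real.log (p ω / q ω) := by
    intro ω hω
    rw [hz]
    rw [Real.log_mul (Real.exp_ne_zero _) (ne_of_gt (div_pos (hqt ω hω) (hpt ω hω)))]
    rw [Real.log_exp, sub_eq_add_neg, ← Real.log_inv, inv_div]
  have hL : ∑ ω ∈ t, p ω • Real.log (z ω)
      = ∑ ω ∈ t, p ω * ∑ j, x j * ω j - ∑ ω ∈ t, p ω * Real.log (p ω / q ω) := by
    rw [← Finset.sum_sub_distrib]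
    refine Finset.sum_congr rfl fun ω hω => ?_
    rw [hlogz ω hω, smul_eq_mul]
    ring
  -- rewrite RHS of Jensen
  have hzsum : ∑ ω ∈ t, p ω • z ω = ∑ ω ∈ t, Real.exp (∑ j, x j * ω j) * q ω := by
    refine Finset.sum_congr rfl fun ω hω => ?_
    have hp := (hpt ω hω).ne'
    rw [smul_eq_mul, hz]
    field_simp
  have hzsum_pos : 0 < ∑ ω ∈ t, Real.exp (∑ j, x j * ω j) * q ω := by
    refine Finset.sum_pos (fun ω hω => mul_pos (Real.exp_pos _) (hqt ω hω)) htne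
  have hzsum_le : ∑ ω ∈ t, Real.exp (∑ j, x j * ω j) * q ω
      ≤ ∑ ω ∈ Ω, Real.exp (∑ j, x j * ω j) * q ω := by
    refine Finset.sum_le_sum_of_subset_of_nonneg (Finset.filter_subset _ _) ?_
    intro ω _ _
    exact mul_nonneg (Real.exp_pos _).le (hq0 ω)
  have hlogmono : Real.log (∑ ω ∈ t, Real.exp (∑ j, x j * ω j) * q ω)
      ≤ Real.log (∑ ω ∈ Ω, Real.exp (∑ j, x j * ω j) * q ω) :=
    Real.log_le_log hzsum_pos hzsum_le
  -- extend the two p-sums from t to Ω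
  have hext1 : ∑ ω ∈ t, p ω * ∑ j, x j * ω j = ∑ ω ∈ Ω, p ω * ∑ j, x j * ω j := by
    refine Finset.sum_filter_of_ne fun ω hω h => ?_
    intro hp; rw [hp] at h; simp at h
  have hext2 : ∑ ω ∈ t, p ω * Real.log (p ω / q ω)
      = ∑ ω ∈ Ω, p ω * Real.log (p ω / q ω) := by
    refine Finset.sum_filter_of_ne fun ω hω h => ?_
    intro hp; rw [hp] at h; simp at h
  have hJ : ∑ ω ∈ t, p ω • Real.log (z ω)
      ≤ Real.log (∑ ω ∈ t, Real.exp (∑ j, x j * ω j) * q ω) := by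
    calc ∑ ω ∈ t, p ω • Real.log (z ω) ≤ Real.log (∑ ω ∈ t, p ω • z ω) := hjensen
      _ = _ := by rw [hzsum]
  rw [hL, hext1, hext2] at hJ
  linarith



private lemma sup_eq_top_of_not_hull {n : ℕ} (Ω : Finset (Fin n → ℝ)) (q : (Fin n → ℝ) → ℝ)
    (hq0 : ∀ ω, 0 ≤ q ω) (hq1 : ∑ ω ∈ Ω, q ω = 1) (θ : Fin n → ℝ)
    (hθ : θ ∉ convexHull ℝ (↑(Ω.filter fun ω => q ω ≠ 0) : Set (Fin n → ℝ))) :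
    (⨆ x : Fin n → ℝ,
        (((∑ j, θ j * x j) -
          Real.log (∑ ω ∈ Ω, Real.exp (∑ j, x j * ω j) * q ω) : ℝ) : EReal)) = ⊤ := by
  classical
  set S := Ω.filter (fun ω => q ω ≠ 0) with hS
  have hZS : ∀ x : Fin n → ℝ, ∑ ω ∈ Ω, Real.exp (∑ j, x j * ω j) * q ω
      = ∑ ω ∈ S, Real.exp (∑ j, x j * ω j) * q ω := by
    intro x
    refine (Finset.sum_filter_of_ne fun ω hω h hq => ?_).symm
    rw [hq, mul_zero] at h; exact h rfl
  have hqS1 : ∑ ω ∈ S, q ω = 1 := by rw [hS, Finset.sum_filter_ne_zero, hq1]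
  have hSne : S.Nonempty := by
    by_contra h
    rw [Finset.not_nonempty_iff_eq_empty] at h
    rw [h, Finset.sum_empty] at hqS1; norm_num at hqS1
  -- separation
  obtain ⟨f, u, hfu, huθ⟩ := geometric_hahn_banach_closed_point
    (convex_convexHull ℝ _) ((S.finite_toSet).isClosed_convexHull (𝕜 := ℝ)) hθ
  set v : Fin n → ℝ := fun j => f (fun i => if j = i then (1:ℝ) else 0) with hv
  have hfy : ∀ y : Fin n → ℝ, f y = ∑ j, y j * v j := by
    intro y
    conv_lhs => rw [pi_eq_sum_univ y, map_sum]
    refine Finset.sum_congr rfl fun j _ => ?_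
    rw [map_smul, smul_eq_mul, hv]
  have hd : 0 < f θ - u := by linarith
  -- key bound: for t ≥ 0, the sup is at least t * (f θ - u)
  have hkey : ∀ t : ℝ, 0 ≤ t →
      t * (f θ - u) ≤ (∑ j, θ j * (t • v) j) -
        Real.log (∑ ω ∈ Ω, Real.exp (∑ j, (t • v) j * ω j) * q ω) := by
    intro t ht
    have h1 : (∑ j, θ j * (t • v) j) = t * f θ := by
      rw [hfy θ, Finset.mul_sum]
      refine Finset.sum_congr rfl fun j _ => ?_
      simp [smul_eq_mul]; ring
    have hexp : ∀ ω ∈ S, Real.exp (∑ j, (t • v) j * ω j) * q ω ≤ Real.exp (t * u) * q ω := by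
      intro ω hω
      have hfω : f ω < u := hfu ω (subset_convexHull ℝ _ (Finset.mem_coe.2 hω))
      have h2 : (∑ j, (t • v) j * ω j) = t * f ω := by
        rw [hfy ω, Finset.mul_sum]
        refine Finset.sum_congr rfl fun j _ => ?_
        simp [smul_eq_mul]; ring
      rw [h2]
      exact mul_le_mul_of_nonneg_right
        (Real.exp_le_exp.2 (mul_le_mul_of_nonneg_left hfω.le ht)) (hq0 ω)
    have hZpos : 0 < ∑ ω ∈ S, Real.exp (∑ j, (t • v) j * ω j) * q ω := by
      refine Finset.sum_pos (fun ω hω => mul_pos (Real.exp_pos _) ?_) hSne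
      exact lt_of_le_of_ne (hq0 ω) (Ne.symm (Finset.mem_filter.1 hω).2)
    have hZle : ∑ ω ∈ S, Real.exp (∑ j, (t • v) j * ω j) * q ω ≤ Real.exp (t * u) := by
      calc ∑ ω ∈ S, Real.exp (∑ j, (t • v) j * ω j) * q ω
          ≤ ∑ ω ∈ S, Real.exp (t * u) * q ω := Finset.sum_le_sum hexp
        _ = Real.exp (t * u) := by rw [← Finset.mul_sum, hqS1, mul_one]
    have hlog : Real.log (∑ ω ∈ Ω, Real.exp (∑ j, (t • v) j * ω j) * q ω) ≤ t * u := by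
      rw [hZS]
      calc Real.log (∑ ω ∈ S, Real.exp (∑ j, (t • v) j * ω j) * q ω)
          ≤ Real.log (Real.exp (t * u)) := Real.log_le_log hZpos hZle
        _ = t * u := Real.log_exp _
    rw [h1]
    nlinarith [hlog]
  rw [iSup_eq_top]
  intro b hb
  induction b using EReal.rec with
  | bot => exact ⟨0, EReal.bot_lt_coe _⟩
  | top => exact absurd hb (lt_irrefl _)
  | coe r =>
    set t : ℝ := max 0 ((r + 1) / (f θ - u)) with htdef
    have ht : 0 ≤ t := le_max_left _ _
    have htval : r < t * (f θ - u) := by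
      have : (r + 1) / (f θ - u) ≤ t := le_max_right _ _
      have h2 : ((r + 1) / (f θ - u)) * (f θ - u) ≤ t * (f θ - u) :=
        mul_le_mul_of_nonneg_right this hd.le
      rw [div_mul_cancel₀ _ hd.ne'] at h2
      linarith
    refine ⟨t • v, ?_⟩
    calc (r : EReal) < ((t * (f θ - u) : ℝ) : EReal) := EReal.coe_lt_coe_iff.2 htval
      _ ≤ _ := EReal.coe_le_coe_iff.2 (hkey t ht)



private lemma continuous_finset_sup' {ι X : Type*} [TopologicalSpace X] {s : Finset ι}
    (hs : s.Nonempty) {F : ι → X → ℝ} (hF : ∀ i, Continuous (F i)) :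
    Continuous fun x => s.sup' hs fun i => F i x := by
  induction hs using Finset.Nonempty.cons_induction with
  | singleton a => simpa using hF a
  | cons a s ha hs ih =>
    have : (fun x => (Finset.cons a s ha).sup' (Finset.cons_nonempty ha) fun i => F i x)
        = fun x => max (F a x) (s.sup' hs fun i => F i x) := by
      funext x
      rw [Finset.sup'_cons hs]
    rw [this]
    exact (hF a).max ih


private lemma mean_dot {n : ℕ} {Ω : Finset (Fin n → ℝ)} {p : (Fin n → ℝ) → ℝ}
    {θ : Fin n → ℝ} (hp1 : ∑ ω ∈ Ω, p ω = 1) (hpmean : ∑ ω ∈ Ω, p ω • ω = θ)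
    (v : Fin n → ℝ) : ∑ ω ∈ Ω, p ω * (∑ j, v j * (ω j - θ j)) = 0 := by
  have h1 : ∑ ω ∈ Ω, p ω * (∑ j, v j * (ω j - θ j))
      = (∑ ω ∈ Ω, p ω * ∑ j, v j * ω j) - (∑ ω ∈ Ω, p ω * ∑ j, v j * θ j) := by
    rw [← Finset.sum_sub_distrib]
    refine Finset.sum_congr rfl fun ω _ => ?_
    rw [← mul_sub, ← Finset.sum_sub_distrib]
    congr 1
    exact Finset.sum_congr rfl fun j _ => by ring
  rw [h1, ← sum_theta_dot hpmean v, ← Finset.sum_mul, hp1, one_mul]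
  rw [sub_eq_zero]
  exact Finset.sum_congr rfl fun j _ => mul_comm _ _



set_option maxHeartbeats 1000000 in
private lemma tilted_exists {n : ℕ} (Ω : Finset (Fin n → ℝ)) (q : (Fin n → ℝ) → ℝ)
    (hq0 : ∀ ω, 0 ≤ q ω) (hqsupp : ∀ ω ∉ Ω, q ω = 0) (hq1 : ∑ ω ∈ Ω, q ω = 1)
    (θ' : Fin n → ℝ) (p₀ : (Fin n → ℝ) → ℝ) (hp₀0 : ∀ ω, 0 ≤ p₀ ω)
    (hp₀1 : ∑ ω ∈ Ω, p₀ ω = 1) (hp₀mean : ∑ ω ∈ Ω, p₀ ω • ω = θ')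
    (hfull : ∀ ω ∈ Ω, q ω ≠ 0 → p₀ ω ≠ 0) (hp₀abs : ∀ ω ∈ Ω, q ω = 0 → p₀ ω = 0) :
    ∃ (x : Fin n → ℝ) (p : (Fin n → ℝ) → ℝ),
      (∀ ω, 0 ≤ p ω) ∧ (∀ ω ∉ Ω, p ω = 0) ∧ (∑ ω ∈ Ω, p ω = 1) ∧
      (∑ ω ∈ Ω, p ω • ω = θ') ∧ (∀ ω, q ω = 0 → p ω = 0) ∧
      klDiv Ω p q = (((∑ j, θ' j * x j) -
        Real.log (∑ ω ∈ Ω, Real.exp (∑ j, x j * ω j) * q ω) : ℝ) : EReal) := by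
  classical
  set S := Ω.filter (fun ω => q ω ≠ 0) with hSdef
  have hSsub : S ⊆ Ω := Finset.filter_subset _ _
  have hqS : ∀ ω ∈ S, 0 < q ω := fun ω hω =>
    lt_of_le_of_ne (hq0 ω) (Ne.symm (Finset.mem_filter.1 hω).2)
  have hqS1 : ∑ ω ∈ S, q ω = 1 := by rw [hSdef, Finset.sum_filter_ne_zero, hq1]
  have hSne : S.Nonempty := by
    by_contra h
    rw [Finset.not_nonempty_iff_eq_empty] at h
    rw [h, Finset.sum_empty] at hqS1; norm_num at hqS1
  set Z : (Fin n → ℝ) → ℝ := fun x => ∑ ω ∈ Ω, Real.exp (∑ j, x j * ω j) * q ω with hZdef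
  have hZS : ∀ x, Z x = ∑ ω ∈ S, Real.exp (∑ j, x j * ω j) * q ω := by
    intro x
    refine (Finset.sum_filter_of_ne fun ω hω h hq => ?_).symm
    rw [hq, mul_zero] at h; exact h rfl
  have hZpos : ∀ x, 0 < Z x := by
    intro x
    rw [hZS]
    exact Finset.sum_pos (fun ω hω => mul_pos (Real.exp_pos _) (hqS ω hω)) hSne
  set g : (Fin n → ℝ) → ℝ := fun x => (∑ j, θ' j * x j) - Real.log (Z x) with hgdef
  have hZcont : Continuous Z := by
    apply continuous_finset_sum
    intro ω _
    exact ((continuous_finset_sum _ fun j _ => (continuous_apply j).mul continuous_const).rexp).mul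
      continuous_const
  have hgcont : Continuous g := by
    refine (continuous_finset_sum _ fun j _ => continuous_const.mul (continuous_apply j)).sub ?_
    rw [continuous_iff_continuousAt]
    intro x
    exact (Real.continuousAt_log (hZpos x).ne').comp hZcont.continuousAt
  have hg0 : g 0 = 0 := by
    have : Z 0 = 1 := by
      rw [hZdef]; simp only [Pi.zero_apply, zero_mul, Finset.sum_const_zero, Real.exp_zero,
        one_mul]; exact hq1
    rw [hgdef]; simp [this]
  set V : Submodule ℝ (Fin n → ℝ) := Submodule.span ℝ ((fun ω => ω - θ') '' ↑S) with hVdef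
  -- step 1: existence of a maximizer of g on V
  have hmaxex : ∃ x, x ∈ V ∧ ∀ y ∈ V, g y ≤ g x := by
    by_cases hVbot : V = ⊥
    · refine ⟨0, Submodule.zero_mem V, fun y hy => ?_⟩
      rw [hVbot, Submodule.mem_bot] at hy
      rw [hy]
    · -- the sphere slice of V is nonempty and compact
      obtain ⟨v₁, hv₁V, hv₁ne⟩ := Submodule.exists_mem_ne_zero_of_ne_bot hVbot
      set K : Set (Fin n → ℝ) := (V : Set (Fin n → ℝ)) ∩ Metric.sphere 0 1 with hKdef
      have hVclosed : IsClosed (V : Set (Fin n → ℝ)) := Submodule.closed_of_finiteDimensional V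
      have hKcompact : IsCompact K := (isCompact_sphere 0 1).inter_left hVclosed
      have hKne : K.Nonempty := by
        refine ⟨‖v₁‖⁻¹ • v₁, V.smul_mem _ hv₁V, ?_⟩
        rw [mem_sphere_iff_norm, sub_zero, norm_smul, norm_inv, norm_norm,
          inv_mul_cancel₀ (norm_ne_zero_iff.2 hv₁ne)]
      set m : (Fin n → ℝ) → ℝ := fun y => S.sup' hSne fun ω => ∑ j, y j * (ω j - θ' j)
        with hmdef
      have hmcont : Continuous m :=
        continuous_finset_sup' hSne fun ω =>
          continuous_finset_sum _ fun j _ => (continuous_apply j).mul continuous_const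
      obtain ⟨v₀, hv₀K, hv₀min⟩ := hKcompact.exists_isMinOn hKne hmcont.continuousOn
      set δ : ℝ := m v₀ with hδdef
      have hδpos : 0 < δ := by
        by_contra hδ
        push_neg at hδ
        have hdot0 : ∀ ω ∈ S, ∑ j, v₀ j * (ω j - θ' j) ≤ 0 := by
          intro ω hω
          exact le_trans (Finset.le_sup' (fun ω => ∑ j, v₀ j * (ω j - θ' j)) hω) hδ
        have hsum0 : ∑ ω ∈ Ω, p₀ ω * (∑ j, v₀ j * (ω j - θ' j)) = 0 :=
          mean_dot hp₀1 hp₀mean v₀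
        have hterms : ∀ ω ∈ Ω, p₀ ω * (∑ j, v₀ j * (ω j - θ' j)) = 0 := by
          refine (Finset.sum_eq_zero_iff_of_nonpos ?_).1 hsum0
          intro ω hω
          by_cases hqω : q ω = 0
          · rw [hp₀abs ω hω hqω, zero_mul]
          · exact mul_nonpos_of_nonneg_of_nonpos (hp₀0 ω)
              (hdot0 ω (Finset.mem_filter.2 ⟨hω, hqω⟩))
        -- v₀ annihilates all generators of V
        set L : (Fin n → ℝ) →ₗ[ℝ] ℝ := ∑ j, v₀ j • LinearMap.proj j with hLdef
        have hLapp : ∀ y, L y = ∑ j, v₀ j * y j := by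
          intro y
          rw [hLdef]
          simp [LinearMap.sum_apply]
        have hgen : (fun ω => ω - θ') '' ↑S ⊆ (LinearMap.ker L : Set (Fin n → ℝ)) := by
          rintro w ⟨ω, hω, rfl⟩
          have hω' : ω ∈ S := hω
          have hp₀pos : 0 < p₀ ω := by
            obtain ⟨hΩ, hq⟩ := Finset.mem_filter.1 hω'
            exact lt_of_le_of_ne (hp₀0 ω) (Ne.symm (hfull ω hΩ hq))
          have := hterms ω (hSsub hω')
          have hdz : ∑ j, v₀ j * (ω j - θ' j) = 0 := by
            rcases mul_eq_zero.1 this with h | h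
            · exact absurd h hp₀pos.ne'
            · exact h
          simp only [SetLike.mem_coe, LinearMap.mem_ker]
          rw [hLapp]
          simpa using hdz
        have hVker : V ≤ LinearMap.ker L := by
          rw [hVdef]
          exact Submodule.span_le.2 hgen
        have hv₀0 : L v₀ = 0 := hVker hv₀K.1
        rw [hLapp] at hv₀0
        have : ∀ j ∈ Finset.univ, v₀ j * v₀ j = 0 := by
          refine (Finset.sum_eq_zero_iff_of_nonneg fun j _ => mul_self_nonneg (v₀ j)).1 hv₀0
        have hv₀z : v₀ = 0 := by
          funext j
          exact mul_self_eq_zero.1 (this j (Finset.mem_univ j))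
        have := hv₀K.2
        rw [mem_sphere_iff_norm, sub_zero, hv₀z, norm_zero] at this
        norm_num at this
      -- coercive bound
      obtain ⟨ω₁, hω₁, hqmin⟩ := S.exists_mem_eq_inf' hSne q
      set qmin : ℝ := S.inf' hSne q with hqmindef
      have hqminpos : 0 < qmin := hqmin ▸ hqS ω₁ hω₁
      have hqmin_le : ∀ ω ∈ S, qmin ≤ q ω := fun ω hω => Finset.inf'_le q hω
      set C : ℝ := -Real.log qmin with hCdef
      have hC0 : 0 ≤ C := by
        have h1 : qmin ≤ 1 := by
          rw [hqmin, ← hqS1]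
          exact Finset.single_le_sum (fun ω hω => (hqS ω hω).le) hω₁
        have := Real.log_nonpos hqminpos.le h1
        rw [hCdef]; linarith
      have hbound : ∀ y, y ∈ V → g y ≤ C - δ * ‖y‖ := by
        intro y hyV
        by_cases hy0 : y = 0
        · rw [hy0, hg0, norm_zero, mul_zero, sub_zero]; exact hC0
        · set u : Fin n → ℝ := ‖y‖⁻¹ • y with hudef
          have hyn : ‖y‖ ≠ 0 := norm_ne_zero_iff.2 hy0
          have huK : u ∈ K := by
            refine ⟨V.smul_mem _ hyV, ?_⟩
            rw [mem_sphere_iff_norm, sub_zero, hudef, norm_smul, norm_inv, norm_norm,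
              inv_mul_cancel₀ hyn]
          have hmu : δ ≤ m u := hv₀min huK
          obtain ⟨ω₂, hω₂, hsup⟩ := S.exists_mem_eq_sup' hSne
            (fun ω => ∑ j, u j * (ω j - θ' j))
          have hdu : δ ≤ ∑ j, u j * (ω₂ j - θ' j) := by
            rw [← hsup]; exact hmu
          have hdy : δ * ‖y‖ ≤ ∑ j, y j * (ω₂ j - θ' j) := by
            have hyu : y = ‖y‖ • u := by
              rw [hudef, smul_smul, mul_inv_cancel₀ hyn, one_smul]
            have h2 : ∑ j, y j * (ω₂ j - θ' j) = ‖y‖ * ∑ j, u j * (ω₂ j - θ' j) := by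
              rw [Finset.mul_sum]
              refine Finset.sum_congr rfl fun j _ => ?_
              conv_lhs => rw [hyu]
              simp [smul_eq_mul]; ring
            rw [h2]
            calc δ * ‖y‖ = ‖y‖ * δ := mul_comm _ _
              _ ≤ ‖y‖ * ∑ j, u j * (ω₂ j - θ' j) :=
                  mul_le_mul_of_nonneg_left hdu (norm_nonneg y)
          -- lower bound on log Z y
          have hZlb : Real.exp (∑ j, y j * ω₂ j) * qmin ≤ Z y := by
            calc Real.exp (∑ j, y j * ω₂ j) * qmin
                ≤ Real.exp (∑ j, y j * ω₂ j) * q ω₂ :=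
                  mul_le_mul_of_nonneg_left (hqmin_le ω₂ hω₂) (Real.exp_pos _).le
              _ ≤ Z y :=
                  Finset.single_le_sum (f := fun ω => Real.exp (∑ j, y j * ω j) * q ω)
                    (fun ω _ => mul_nonneg (Real.exp_pos _).le (hq0 ω)) (hSsub hω₂)
          have hloglb : (∑ j, y j * ω₂ j) + Real.log qmin ≤ Real.log (Z y) := by
            have := Real.log_le_log (mul_pos (Real.exp_pos _) hqminpos) hZlb
            rwa [Real.log_mul (Real.exp_ne_zero _) hqminpos.ne', Real.log_exp] at this
          have hfinal : (∑ j, θ' j * y j) - (∑ j, y j * ω₂ j)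
              = -∑ j, y j * (ω₂ j - θ' j) := by
            rw [← Finset.sum_sub_distrib, ← Finset.sum_neg_distrib]
            exact Finset.sum_congr rfl fun j _ => by ring
          have hgy : g y = (∑ j, θ' j * y j) - Real.log (Z y) := rfl
          rw [hgy]
          linarith [hloglb, hdy, hfinal]
      -- attainment on a big closed ball
      set R : ℝ := max 0 ((C - g 0) / δ) with hRdef
      have hR0 : 0 ≤ R := le_max_left _ _
      set K2 : Set (Fin n → ℝ) := (V : Set (Fin n → ℝ)) ∩ Metric.closedBall 0 R with hK2def
      have hK2compact : IsCompact K2 := (isCompact_closedBall 0 R).inter_left hVclosed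
      have hK2ne : K2.Nonempty := by
        refine ⟨0, V.zero_mem, ?_⟩
        rw [Metric.mem_closedBall, dist_self]; exact hR0
      obtain ⟨xs, hxsK2, hxsmax⟩ := hK2compact.exists_isMaxOn hK2ne hgcont.continuousOn
      refine ⟨xs, hxsK2.1, fun y hyV => ?_⟩
      by_cases hyR : ‖y‖ ≤ R
      · exact hxsmax ⟨hyV, by rwa [Metric.mem_closedBall, dist_zero_right]⟩
      · push_neg at hyR
        have h1 : g y ≤ C - δ * ‖y‖ := hbound y hyV
        have h2 : C - δ * ‖y‖ < g 0 := by
          have hRge : (C - g 0) / δ ≤ R := le_max_right _ _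
          have : C - g 0 ≤ δ * R := by
            rw [div_le_iff₀ hδpos] at hRge
            linarith
          nlinarith
        have h3 : g 0 ≤ g xs := hxsmax ⟨V.zero_mem, by
          rw [Metric.mem_closedBall, dist_self]; exact hR0⟩
        linarith
  
  obtain ⟨xs, hxsV, hxsmax⟩ := hmaxex
  set p : (Fin n → ℝ) → ℝ := fun ω => Real.exp (∑ j, xs j * ω j) * q ω / Z xs with hpdef
  have hZne : Z xs ≠ 0 := (hZpos xs).ne'
  have hp0 : ∀ ω, 0 ≤ p ω := fun ω =>
    div_nonneg (mul_nonneg (Real.exp_pos _).le (hq0 ω)) (hZpos xs).le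
  have hpq0 : ∀ ω, q ω = 0 → p ω = 0 := by
    intro ω h
    have : p ω = Real.exp (∑ j, xs j * ω j) * q ω / Z xs := rfl
    rw [this, h, mul_zero, zero_div]
  have hpsupp : ∀ ω ∉ Ω, p ω = 0 := fun ω h => hpq0 ω (hqsupp ω h)
  have hp1 : ∑ ω ∈ Ω, p ω = 1 := by
    have : ∑ ω ∈ Ω, p ω = (∑ ω ∈ Ω, Real.exp (∑ j, xs j * ω j) * q ω) / Z xs :=
      (Finset.sum_div _ _ _).symm
    rw [this, div_self hZne]
  -- criticality
  have hcrit : ∀ v, v ∈ V → (∑ j, θ' j * v j) * Z xs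
      = ∑ ω ∈ Ω, Real.exp (∑ j, xs j * ω j) * (∑ j, v j * ω j) * q ω := by
    intro v hv
    set A : ℝ := ∑ j, θ' j * xs j with hA
    set B : ℝ := ∑ j, θ' j * v j with hB
    set a : (Fin n → ℝ) → ℝ := fun ω => ∑ j, xs j * ω j with ha
    set b : (Fin n → ℝ) → ℝ := fun ω => ∑ j, v j * ω j with hb
    set ψ : ℝ → ℝ := fun t => (A + t * B)
      - Real.log (∑ ω ∈ Ω, Real.exp (a ω + t * b ω) * q ω) with hψdef
    have hψg : ∀ t, ψ t = g (xs + t • v) := by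
      intro t
      have h1 : ∑ j, θ' j * (xs + t • v) j = A + t * B := by
        have : ∀ j, θ' j * (xs + t • v) j = θ' j * xs j + t * (θ' j * v j) := by
          intro j
          simp only [Pi.add_apply, Pi.smul_apply, smul_eq_mul]
          ring
        rw [Finset.sum_congr rfl fun j _ => this j, Finset.sum_add_distrib, ← Finset.mul_sum]
      have h2 : ∀ ω, ∑ j, (xs + t • v) j * ω j = a ω + t * b ω := by
        intro ω
        have : ∀ j, (xs + t • v) j * ω j = xs j * ω j + t * (v j * ω j) := by
          intro j
          simp only [Pi.add_apply, Pi.smul_apply, smul_eq_mul]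
          ring
        rw [Finset.sum_congr rfl fun j _ => this j, Finset.sum_add_distrib, ← Finset.mul_sum]
      have hgval : g (xs + t • v) = (∑ j, θ' j * (xs + t • v) j)
          - Real.log (∑ ω ∈ Ω, Real.exp (∑ j, (xs + t • v) j * ω j) * q ω) := rfl
      rw [hgval, h1]
      have : ∑ ω ∈ Ω, Real.exp (∑ j, (xs + t • v) j * ω j) * q ω
          = ∑ ω ∈ Ω, Real.exp (a ω + t * b ω) * q ω :=
        Finset.sum_congr rfl fun ω _ => by rw [h2 ω]
      rw [this]
    have hval : (∑ ω ∈ Ω, Real.exp (a ω + 0 * b ω) * q ω) = Z xs := by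
      simp only [zero_mul, add_zero]
      rfl
    have hZt : HasDerivAt (fun t : ℝ => ∑ ω ∈ Ω, Real.exp (a ω + t * b ω) * q ω)
        (∑ ω ∈ Ω, (Real.exp (a ω + 0 * b ω) * b ω) * q ω) 0 := by
      apply HasDerivAt.fun_sum
      intro ω _
      exact (((hasDerivAt_mul_const (b ω)).const_add (a ω)).exp).mul_const (q ω)
    have hne0 : (∑ ω ∈ Ω, Real.exp (a ω + 0 * b ω) * q ω) ≠ 0 := by
      rw [hval]; exact hZne
    have hψ' : HasDerivAt ψ
        (B - (∑ ω ∈ Ω, (Real.exp (a ω + 0 * b ω) * b ω) * q ω)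
          / (∑ ω ∈ Ω, Real.exp (a ω + 0 * b ω) * q ω)) 0 :=
      ((hasDerivAt_mul_const B).const_add A).sub (hZt.log hne0)
    have hmaxψ : IsLocalMax ψ 0 := by
      apply Filter.Eventually.of_forall
      intro t
      have h0 : ψ 0 = g xs := by
        rw [hψg 0, zero_smul, add_zero]
      rw [hψg t, h0]
      exact hxsmax _ (V.add_mem hxsV (V.smul_mem t hv))
    have h0 := hmaxψ.deriv_eq_zero
    rw [hψ'.deriv] at h0
    rw [hval] at h0
    have hBN : B = (∑ ω ∈ Ω, (Real.exp (a ω + 0 * b ω) * b ω) * q ω) / Z xs := by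
      linarith [h0]
    have hBZ : B * Z xs = ∑ ω ∈ Ω, (Real.exp (a ω + 0 * b ω) * b ω) * q ω := by
      rw [hBN, div_mul_cancel₀ _ hZne]
    rw [hBZ]
    refine Finset.sum_congr rfl fun ω _ => ?_
    rw [zero_mul, add_zero]
  -- the tilted distribution has mean θ'
  have hpmean : ∑ ω ∈ Ω, p ω • ω = θ' := by
    set μ : Fin n → ℝ := ∑ ω ∈ Ω, p ω • ω with hμdef
    set d : Fin n → ℝ := θ' - μ with hddef
    have hdV : d ∈ V := by
      have h1 : ∑ ω ∈ Ω, p ω • (ω - θ') = μ - θ' := by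
        have h1a : ∀ ω, p ω • (ω - θ') = p ω • ω - p ω • θ' := fun ω => smul_sub _ _ _
        rw [Finset.sum_congr rfl fun ω _ => h1a ω, Finset.sum_sub_distrib, ← Finset.sum_smul,
          hp1, one_smul, ← hμdef]
      have h2 : ∑ ω ∈ Ω, p ω • (ω - θ') ∈ V := by
        refine Submodule.sum_mem _ fun ω hω => ?_
        by_cases hqω : q ω = 0
        · rw [hpq0 ω hqω, zero_smul]
          exact V.zero_mem
        · exact V.smul_mem _ (Submodule.subset_span ⟨ω, Finset.mem_filter.2 ⟨hω, hqω⟩, rfl⟩)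
      have h3 : d = -(μ - θ') := by rw [hddef, neg_sub]
      rw [h3, ← h1]
      exact V.neg_mem h2
    have hc := hcrit d hdV
    have hRHS : ∑ ω ∈ Ω, Real.exp (∑ j, xs j * ω j) * (∑ j, d j * ω j) * q ω
        = (∑ ω ∈ Ω, p ω * ∑ j, d j * ω j) * Z xs := by
      rw [Finset.sum_mul]
      refine Finset.sum_congr rfl fun ω _ => ?_
      have hpω : p ω = Real.exp (∑ j, xs j * ω j) * q ω / Z xs := rfl
      rw [hpω]
      field_simp
    rw [hRHS, ← sum_theta_dot hμdef.symm d] at hc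
    have hc2 : ∑ j, θ' j * d j = ∑ j, μ j * d j := mul_right_cancel₀ hZne hc
    have hdd : ∑ j, d j * d j = 0 := by
      have h3 : ∑ j, (θ' j - μ j) * d j = 0 := by
        have h3a : ∀ j, (θ' j - μ j) * d j = θ' j * d j - μ j * d j := fun j => by ring
        rw [Finset.sum_congr rfl fun j _ => h3a j, Finset.sum_sub_distrib, hc2, sub_self]
      have h3b : ∀ j, d j = θ' j - μ j := fun j => rfl
      rw [Finset.sum_congr rfl fun j (hj : j ∈ Finset.univ) =>
        (by rw [h3b j] : d j * d j = (θ' j - μ j) * d j)]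
      exact h3
    have hd0 : d = 0 := by
      funext j
      have h4 := (Finset.sum_eq_zero_iff_of_nonneg fun j _ => mul_self_nonneg (d j)).1 hdd
        j (Finset.mem_univ j)
      exact mul_self_eq_zero.1 h4
    have h5 : θ' - μ = 0 := hd0
    have h6 : μ = θ' := by
      have := sub_eq_zero.1 h5
      exact this.symm
    exact h6
  -- KL value
  have hkl : klDiv Ω p q = (((∑ j, θ' j * xs j) - Real.log (Z xs) : ℝ) : EReal) := by
    have hterm : ∀ ω ∈ Ω, (if p ω = 0 then (0:EReal) else if q ω = 0 then (⊤:EReal)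
          else ((p ω * Real.log (p ω / q ω) : ℝ) : EReal))
        = ((p ω * ((∑ j, xs j * ω j) - Real.log (Z xs)) : ℝ) : EReal) := by
      intro ω hω
      by_cases hqω : q ω = 0
      · rw [if_pos (hpq0 ω hqω), hpq0 ω hqω, zero_mul]
        norm_num
      · have hqpos : 0 < q ω := lt_of_le_of_ne (hq0 ω) (Ne.symm hqω)
        have hppos : 0 < p ω := div_pos (mul_pos (Real.exp_pos _) hqpos) (hZpos xs)
        rw [if_neg hppos.ne', if_neg hqω]
        have hdivp : p ω / q ω = Real.exp (∑ j, xs j * ω j) / Z xs := by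
          have hpω : p ω = Real.exp (∑ j, xs j * ω j) * q ω / Z xs := rfl
          rw [hpω]
          field_simp
        rw [hdivp, Real.log_div (Real.exp_ne_zero _) hZne, Real.log_exp]
    rw [klDiv, Finset.sum_congr rfl hterm, ← ereal_coe_sum]
    have hfin : ∑ ω ∈ Ω, p ω * ((∑ j, xs j * ω j) - Real.log (Z xs))
        = (∑ j, θ' j * xs j) - Real.log (Z xs) := by
      have hfa : ∀ ω, p ω * ((∑ j, xs j * ω j) - Real.log (Z xs))
          = p ω * (∑ j, xs j * ω j) - p ω * Real.log (Z xs) := fun ω => by ring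
      rw [Finset.sum_congr rfl fun ω _ => hfa ω, Finset.sum_sub_distrib,
        ← sum_theta_dot hpmean xs, ← Finset.sum_mul, hp1, one_mul]
    rw [hfin]
  exact ⟨xs, p, hp0, hpsupp, hp1, hpmean, hpq0, hkl⟩
private lemma klDiv_eq_G {n : ℕ} {Ω : Finset (Fin n → ℝ)} {p q : (Fin n → ℝ) → ℝ}
    (habs : ∀ ω ∈ Ω, q ω = 0 → p ω = 0) :
    klDiv Ω p q
      = ((∑ ω ∈ Ω, (p ω * Real.log (p ω) - p ω * Real.log (q ω)) : ℝ) : EReal) := by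
  rw [klDiv, ereal_coe_sum]
  refine Finset.sum_congr rfl fun ω hω => ?_
  by_cases hp : p ω = 0
  · rw [if_pos hp, hp]
    norm_num
  · rw [if_neg hp, if_neg (fun hq => hp (habs ω hω hq))]
    rw [Real.log_div hp (fun hq => hp (habs ω hω hq))]
    rw [mul_sub]

private lemma ereal_exists_real {x : EReal} (h1 : x ≠ ⊤) (h2 : x ≠ ⊥) :
    ∃ r : ℝ, x = (r : EReal) := by
  induction x using EReal.rec with
  | bot => exact absurd rfl h2
  | coe r => exact ⟨r, rfl⟩
  | top => exact absurd rfl h1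

set_option maxHeartbeats 2000000 in
/-- The Legendre dual `F(θ)` of the log-moment generating function of a
pmf `q` on a finite set `Ω ⊆ ℝ^n` equals the minimum of `D_KL(p‖q)` over pmfs `p` on `Ω`
with mean `θ` (and equals `+∞` if no such `p` exists, since `sInf ∅ = ⊤`). -/
theorem stmt_8 {n : ℕ} (Ω : Finset (Fin n → ℝ)) (q : (Fin n → ℝ) → ℝ)
    (hq0 : ∀ ω, 0 ≤ q ω) (hqsupp : ∀ ω ∉ Ω, q ω = 0) (hq1 : ∑ ω ∈ Ω, q ω = 1)
    (θ : Fin n → ℝ) :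
    (⨆ x : Fin n → ℝ,
        (((∑ j, θ j * x j) -
          Real.log (∑ ω ∈ Ω, Real.exp (∑ j, x j * ω j) * q ω) : ℝ) : EReal)) =
      sInf { D : EReal | ∃ p : (Fin n → ℝ) → ℝ,
        (∀ ω, 0 ≤ p ω) ∧ (∀ ω ∉ Ω, p ω = 0) ∧ (∑ ω ∈ Ω, p ω = 1) ∧
        (∑ ω ∈ Ω, p ω • ω) = θ ∧ D = klDiv Ω p q } := by
  classical
  apply le_antisymm
  · -- easy direction: Gibbs' inequality
    refine le_sInf ?_
    rintro D ⟨p, hp0, hpsupp, hp1, hpmean, rfl⟩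
    by_cases habs : ∀ ω ∈ Ω, q ω = 0 → p ω = 0
    · rw [klDiv_eq_coe habs]
      refine iSup_le fun x => ?_
      rw [EReal.coe_le_coe_iff]
      have hg := gibbs Ω p q hp0 hq0 hp1 habs x
      rw [sum_theta_dot hpmean x]
      exact hg
    · push_neg at habs
      obtain ⟨ω₀, hω₀, hq₀, hp₀⟩ := habs
      rw [klDiv_eq_top ω₀ hω₀ hq₀ hp₀]
      exact le_top
  · -- hard direction
    by_cases hrep : ∃ p : (Fin n → ℝ) → ℝ, (∀ ω, 0 ≤ p ω) ∧ (∀ ω ∉ Ω, p ω = 0) ∧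
        (∑ ω ∈ Ω, p ω = 1) ∧ (∑ ω ∈ Ω, p ω • ω = θ) ∧ (∀ ω ∈ Ω, q ω = 0 → p ω = 0)
    · obtain ⟨p, hp0, hpsupp, hp1, hpmean, hpabs⟩ := hrep
      rcases eq_or_ne (⨆ x : Fin n → ℝ,
          (((∑ j, θ j * x j) -
            Real.log (∑ ω ∈ Ω, Real.exp (∑ j, x j * ω j) * q ω) : ℝ) : EReal)) ⊤ with htop | hne
      · rw [htop]; exact le_top
      have hF0 : (0 : EReal) ≤ ⨆ x : Fin n → ℝ,
          (((∑ j, θ j * x j) -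
            Real.log (∑ ω ∈ Ω, Real.exp (∑ j, x j * ω j) * q ω) : ℝ) : EReal) := by
        refine le_iSup_of_le 0 (le_of_eq ?_)
        have h1 : (∑ j, θ j * (0 : Fin n → ℝ) j) = 0 := by simp
        have h2 : (∑ ω ∈ Ω, Real.exp (∑ j, (0 : Fin n → ℝ) j * ω j) * q ω) = 1 := by
          simp [hq1]
        rw [h1, h2, Real.log_one, sub_zero, EReal.coe_zero]
      obtain ⟨r, hr⟩ := ereal_exists_real hne (fun hbot => by
        rw [hbot] at hF0
        exact absurd hF0 (by simp))
      have hr0 : 0 ≤ r := by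
        rw [hr, ← EReal.coe_zero, EReal.coe_le_coe_iff] at hF0
        exact hF0
      have hgle : ∀ x : Fin n → ℝ, (∑ j, θ j * x j) -
          Real.log (∑ ω ∈ Ω, Real.exp (∑ j, x j * ω j) * q ω) ≤ r := by
        intro x
        rw [← EReal.coe_le_coe_iff, ← hr]
        exact le_iSup (fun x : Fin n → ℝ => (((∑ j, θ j * x j) -
          Real.log (∑ ω ∈ Ω, Real.exp (∑ j, x j * ω j) * q ω) : ℝ) : EReal)) x
      -- mean of q and gibbs bound for it
      set c : Fin n → ℝ := ∑ ω ∈ Ω, q ω • ω with hcdef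
      have hgc : ∀ x : Fin n → ℝ, (∑ j, c j * x j) -
          Real.log (∑ ω ∈ Ω, Real.exp (∑ j, x j * ω j) * q ω) ≤ 0 := by
        intro x
        have hgq := gibbs Ω q q hq0 hq0 hq1 (fun ω _ h => h) x
        have hz : ∑ ω ∈ Ω, q ω * Real.log (q ω / q ω) = 0 := by
          refine Finset.sum_eq_zero fun ω _ => ?_
          by_cases h : q ω = 0
          · rw [h, zero_mul]
          · rw [div_self h, Real.log_one, mul_zero]
        rw [hz] at hgq
        rw [sum_theta_dot hcdef.symm x]
        exact hgq
      -- the approximating sequence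
      set ε : ℕ → ℝ := fun m => 1 / (m + 1) with hεdef
      have hε0 : ∀ m, 0 < ε m := fun m => by positivity
      have hε1 : ∀ m, ε m ≤ 1 := by
        intro m
        rw [hεdef]
        rw [div_le_one (by positivity)]
        norm_num
      set θm : ℕ → (Fin n → ℝ) := fun m => (1 - ε m) • θ + ε m • c with hθmdef
      set p₀ : ℕ → (Fin n → ℝ) → ℝ := fun m ω => (1 - ε m) * p ω + ε m * q ω with hp₀def
      have hmain : ∀ m : ℕ, ∃ (x : Fin n → ℝ) (pp : (Fin n → ℝ) → ℝ),
          (∀ ω, 0 ≤ pp ω) ∧ (∀ ω ∉ Ω, pp ω = 0) ∧ (∑ ω ∈ Ω, pp ω = 1) ∧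
          (∑ ω ∈ Ω, pp ω • ω = θm m) ∧ (∀ ω, q ω = 0 → pp ω = 0) ∧
          klDiv Ω pp q = (((∑ j, θm m j * x j) -
            Real.log (∑ ω ∈ Ω, Real.exp (∑ j, x j * ω j) * q ω) : ℝ) : EReal) := by
        intro m
        refine tilted_exists Ω q hq0 hqsupp hq1 (θm m) (p₀ m) ?_ ?_ ?_ ?_ ?_
        · intro ω
          have := hε0 m
          have := hε1 m
          have := hp0 ω
          have := hq0 ω
          have : (0:ℝ) ≤ (1 - ε m) * p ω := mul_nonneg (by linarith) (hp0 ω)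
          have : (0:ℝ) ≤ ε m * q ω := mul_nonneg (hε0 m).le (hq0 ω)
          show (0:ℝ) ≤ (1 - ε m) * p ω + ε m * q ω
          linarith
        · show ∑ ω ∈ Ω, ((1 - ε m) * p ω + ε m * q ω) = 1
          rw [Finset.sum_add_distrib, ← Finset.mul_sum, ← Finset.mul_sum, hp1, hq1]
          ring
        · show ∑ ω ∈ Ω, ((1 - ε m) * p ω + ε m * q ω) • ω = θm m
          have h1 : ∀ ω : Fin n → ℝ, ((1 - ε m) * p ω + ε m * q ω) • ω
              = (1 - ε m) • (p ω • ω) + ε m • (q ω • ω) := by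
            intro ω
            rw [add_smul, smul_smul, smul_smul]
          rw [Finset.sum_congr rfl fun ω _ => h1 ω, Finset.sum_add_distrib,
            ← Finset.smul_sum, ← Finset.smul_sum, hpmean, ← hcdef]
        · intro ω hω hq
          show (1 - ε m) * p ω + ε m * q ω ≠ 0
          have hpω : 0 < q ω := lt_of_le_of_ne (hq0 ω) (Ne.symm hq)
          have h2 : 0 < ε m * q ω := mul_pos (hε0 m) hpω
          have h3 : 0 ≤ (1 - ε m) * p ω := mul_nonneg (by linarith [hε1 m]) (hp0 ω)
          linarith
        · intro ω hω hq
          show (1 - ε m) * p ω + ε m * q ω = 0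
          rw [hpabs ω hω hq, hq, mul_zero, mul_zero, add_zero]
      choose xs ps hps0 hpssupp hps1 hpsmean hpsabs hpskl using hmain
      -- setup for the compactness argument
      set S := Ω.filter (fun ω => q ω ≠ 0) with hSdef
      have hSsub : S ⊆ Ω := Finset.filter_subset _ _
      have hsum_S : ∀ f : (Fin n → ℝ) → ℝ, (∀ ω ∈ Ω, q ω = 0 → f ω = 0) →
          ∑ ω ∈ S, f ω = ∑ ω ∈ Ω, f ω := by
        intro f hf
        refine Finset.sum_filter_of_ne fun ω hω hne => ?_
        intro hq; exact hne (hf ω hω hq)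
      -- the real-valued KL divergences of the approximating sequence are at most r
      have hval_le : ∀ m, ∑ ω ∈ Ω,
          (ps m ω * Real.log (ps m ω) - ps m ω * Real.log (q ω)) ≤ r := by
        intro m
        have h1 := hpskl m
        rw [klDiv_eq_G (fun ω _ hq => hpsabs m ω hq)] at h1
        have h2 : ∑ ω ∈ Ω, (ps m ω * Real.log (ps m ω) - ps m ω * Real.log (q ω))
            = (∑ j, θm m j * xs m j)
              - Real.log (∑ ω ∈ Ω, Real.exp (∑ j, xs m j * ω j) * q ω) :=
          EReal.coe_eq_coe_iff.1 h1
        have h3 : (∑ j, θm m j * xs m j)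
            = (1 - ε m) * (∑ j, θ j * xs m j) + ε m * (∑ j, c j * xs m j) := by
          rw [Finset.mul_sum, Finset.mul_sum, ← Finset.sum_add_distrib]
          refine Finset.sum_congr rfl fun j _ => ?_
          have h3a : θm m j = (1 - ε m) * θ j + ε m * c j := by
            show ((1 - ε m) • θ + ε m • c) j = _
            simp only [Pi.add_apply, Pi.smul_apply, smul_eq_mul]
          rw [h3a]; ring
        have h4 := hgle (xs m)
        have h5 := hgc (xs m)
        have h6 : (1 - ε m) * ((∑ j, θ j * xs m j)
            - Real.log (∑ ω ∈ Ω, Real.exp (∑ j, xs m j * ω j) * q ω)) ≤ (1 - ε m) * r :=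
          mul_le_mul_of_nonneg_left h4 (by linarith [hε1 m])
        have h7 : ε m * ((∑ j, c j * xs m j)
            - Real.log (∑ ω ∈ Ω, Real.exp (∑ j, xs m j * ω j) * q ω)) ≤ 0 :=
          mul_nonpos_of_nonneg_of_nonpos (hε0 m).le h5
        have h8 : (1 - ε m) * r ≤ r := by
          nlinarith [hε0 m, hr0]
        rw [h2, h3]
        nlinarith [h6, h7, h8]
      -- extract a convergent subsequence of the restrictions to S
      have hps_le1 : ∀ m ω, ω ∈ Ω → ps m ω ≤ 1 := by
        intro m ω hω
        rw [← hps1 m]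
        exact Finset.single_le_sum (fun ω' _ => hps0 m ω') hω
      have hPK : ∀ m, (fun i : ↥S => ps m i) ∈
          Set.pi Set.univ (fun _ : ↥S => Set.Icc (0:ℝ) 1) := by
        intro m
        rw [Set.mem_univ_pi]
        intro i
        exact ⟨hps0 m i, hps_le1 m i (hSsub i.2)⟩
      obtain ⟨a, haK, φ, hφ, hconv⟩ :=
        (isCompact_univ_pi fun _ : ↥S => isCompact_Icc).tendsto_subseq hPK
      have hφto : Filter.Tendsto φ Filter.atTop Filter.atTop := hφ.tendsto_atTop
      have hεto : Filter.Tendsto (fun k => ε (φ k)) Filter.atTop (nhds 0) :=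
        tendsto_one_div_add_atTop_nhds_zero_nat.comp hφto
      have ha0 : ∀ i : ↥S, 0 ≤ a i := by
        intro i
        have := (Set.mem_univ_pi.1 haK) i
        exact this.1
      -- limit identities
      have hSuma : ∑ i : ↥S, a i = 1 := by
        have h1 : Filter.Tendsto ((fun P : ↥S → ℝ => ∑ i : ↥S, P i) ∘
            (fun m (i : ↥S) => ps m i) ∘ φ) Filter.atTop (nhds (∑ i : ↥S, a i)) :=
          ((continuous_finset_sum _ fun i _ =>
            continuous_apply i).tendsto a).comp hconv
        have h2 : ((fun P : ↥S → ℝ => ∑ i : ↥S, P i) ∘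
            (fun m (i : ↥S) => ps m i) ∘ φ) = fun _ => (1:ℝ) := by
          funext k
          show ∑ i : ↥S, ps (φ k) ↑i = 1
          rw [Finset.sum_coe_sort S (ps (φ k)),
            hsum_S (ps (φ k)) (fun ω _ hq => hpsabs (φ k) ω hq), hps1 (φ k)]
        rw [h2] at h1
        exact tendsto_nhds_unique h1 tendsto_const_nhds
      have hMa : ∀ j, ∑ i : ↥S, a i * (i : Fin n → ℝ) j = θ j := by
        intro j
        have h1 : Filter.Tendsto ((fun P : ↥S → ℝ => ∑ i : ↥S, P i * (i : Fin n → ℝ) j) ∘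
            (fun m (i : ↥S) => ps m i) ∘ φ) Filter.atTop
            (nhds (∑ i : ↥S, a i * (i : Fin n → ℝ) j)) :=
          ((continuous_finset_sum _ fun i _ =>
            (continuous_apply i).mul continuous_const).tendsto a).comp hconv
        have h2 : ((fun P : ↥S → ℝ => ∑ i : ↥S, P i * (i : Fin n → ℝ) j) ∘
            (fun m (i : ↥S) => ps m i) ∘ φ)
            = fun k => (1 - ε (φ k)) * θ j + ε (φ k) * c j := by
          funext k
          show ∑ i : ↥S, ps (φ k) ↑i * (i : Fin n → ℝ) j = _
          calc ∑ i : ↥S, ps (φ k) ↑i * (i : Fin n → ℝ) j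
              = ∑ ω ∈ S, ps (φ k) ω * ω j :=
                Finset.sum_coe_sort S (fun ω => ps (φ k) ω * ω j)
            _ = ∑ ω ∈ Ω, ps (φ k) ω * ω j :=
                hsum_S _ (fun ω _ hq => by rw [hpsabs (φ k) ω hq, zero_mul])
            _ = θm (φ k) j := by
                rw [← hpsmean (φ k), Finset.sum_apply]
                simp
            _ = (1 - ε (φ k)) * θ j + ε (φ k) * c j := by
                show ((1 - ε (φ k)) • θ + ε (φ k) • c) j = _
                simp only [Pi.add_apply, Pi.smul_apply, smul_eq_mul]
        rw [h2] at h1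
        have h4 : Filter.Tendsto (fun k => (1 - ε (φ k)) * θ j + ε (φ k) * c j)
            Filter.atTop (nhds (θ j)) := by
          have h5 : Filter.Tendsto (fun k => (1 - ε (φ k)) * θ j + ε (φ k) * c j)
              Filter.atTop (nhds ((1 - 0) * θ j + 0 * c j)) :=
            (((tendsto_const_nhds.sub hεto).mul tendsto_const_nhds).add
              (hεto.mul tendsto_const_nhds))
          simpa using h5
        exact tendsto_nhds_unique h1 h4
      have hGa : ∑ i : ↥S, (a i * Real.log (a i) - a i * Real.log (q i)) ≤ r := by
        have h1 : Filter.Tendsto ((fun P : ↥S → ℝ =>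
            ∑ i : ↥S, (P i * Real.log (P i) - P i * Real.log (q i))) ∘
            (fun m (i : ↥S) => ps m i) ∘ φ) Filter.atTop
            (nhds (∑ i : ↥S, (a i * Real.log (a i) - a i * Real.log (q i)))) := by
          refine ((continuous_finset_sum _ fun i _ => ?_).tendsto a).comp hconv
          exact (Real.continuous_mul_log.comp (continuous_apply i)).sub
            ((continuous_apply i).mul continuous_const)
        refine le_of_tendsto h1 (Filter.Eventually.of_forall fun k => ?_)
        show ∑ i : ↥S, (ps (φ k) ↑i * Real.log (ps (φ k) ↑i)
            - ps (φ k) ↑i * Real.log (q ↑i)) ≤ r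
        rw [Finset.sum_coe_sort S
            (fun ω => ps (φ k) ω * Real.log (ps (φ k) ω) - ps (φ k) ω * Real.log (q ω)),
          hsum_S _ (fun ω _ hq => by rw [hpsabs (φ k) ω hq, hq]; ring)]
        exact hval_le (φ k)
      -- the limit pmf
      set phat : (Fin n → ℝ) → ℝ := fun ω => if h : ω ∈ S then a ⟨ω, h⟩ else 0 with hphatdef
      have hphat_eq : ∀ i : ↥S, phat ↑i = a i := by
        intro i
        show (if h : (i : Fin n → ℝ) ∈ S then a ⟨↑i, h⟩ else 0) = a i
        rw [dif_pos i.2]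
      have hphatS : ∀ ω, ω ∉ S → phat ω = 0 := by
        intro ω h
        show (if h : ω ∈ S then a ⟨ω, h⟩ else 0) = 0
        rw [dif_neg h]
      have hphat0 : ∀ ω, 0 ≤ phat ω := by
        intro ω
        by_cases h : ω ∈ S
        · have : phat ω = a ⟨ω, h⟩ := hphat_eq ⟨ω, h⟩
          rw [this]; exact ha0 _
        · rw [hphatS ω h]
      have hphatsupp : ∀ ω ∉ Ω, phat ω = 0 :=
        fun ω h => hphatS ω (fun hS => h (hSsub hS))
      have hphatabs : ∀ ω ∈ Ω, q ω = 0 → phat ω = 0 := by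
        intro ω hω hq
        exact hphatS ω (fun hS => (Finset.mem_filter.1 hS).2 hq)
      have hphat1 : ∑ ω ∈ Ω, phat ω = 1 := by
        rw [← hsum_S phat hphatabs, ← Finset.sum_coe_sort S phat,
          Finset.sum_congr rfl fun i _ => hphat_eq i]
        exact hSuma
      have hphatmean : ∑ ω ∈ Ω, phat ω • ω = θ := by
        funext j
        rw [Finset.sum_apply]
        calc ∑ ω ∈ Ω, (phat ω • ω) j
            = ∑ ω ∈ Ω, phat ω * ω j := Finset.sum_congr rfl fun ω _ => rfl
          _ = ∑ ω ∈ S, phat ω * ω j :=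
              (hsum_S _ (fun ω hω hq => by rw [hphatabs ω hω hq, zero_mul])).symm
          _ = ∑ i : ↥S, phat ↑i * (i : Fin n → ℝ) j :=
              (Finset.sum_coe_sort S (fun ω => phat ω * ω j)).symm
          _ = ∑ i : ↥S, a i * (i : Fin n → ℝ) j :=
              Finset.sum_congr rfl fun i _ => by rw [hphat_eq i]
          _ = θ j := hMa j
      have hklphat : klDiv Ω phat q
          = ((∑ i : ↥S, (a i * Real.log (a i) - a i * Real.log (q i)) : ℝ) : EReal) := by
        rw [klDiv_eq_G hphatabs]
        congr 1
        calc ∑ ω ∈ Ω, (phat ω * Real.log (phat ω) - phat ω * Real.log (q ω))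
            = ∑ ω ∈ S, (phat ω * Real.log (phat ω) - phat ω * Real.log (q ω)) :=
              (hsum_S _ (fun ω hω hq => by rw [hphatabs ω hω hq]; ring)).symm
          _ = ∑ i : ↥S, (phat ↑i * Real.log (phat ↑i) - phat ↑i * Real.log (q ↑i)) :=
              (Finset.sum_coe_sort S
                (fun ω => phat ω * Real.log (phat ω) - phat ω * Real.log (q ω))).symm
          _ = ∑ i : ↥S, (a i * Real.log (a i) - a i * Real.log (q ↑i)) :=
              Finset.sum_congr rfl fun i _ => by rw [hphat_eq i]
      calc sInf { D : EReal | ∃ p : (Fin n → ℝ) → ℝ,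
            (∀ ω, 0 ≤ p ω) ∧ (∀ ω ∉ Ω, p ω = 0) ∧ (∑ ω ∈ Ω, p ω = 1) ∧
            (∑ ω ∈ Ω, p ω • ω) = θ ∧ D = klDiv Ω p q }
          ≤ klDiv Ω phat q :=
            sInf_le ⟨phat, hphat0, hphatsupp, hphat1, hphatmean, rfl⟩
        _ ≤ ((r : ℝ) : EReal) := by
            rw [hklphat]
            exact EReal.coe_le_coe_iff.2 hGa
        _ = _ := hr.symm
    · -- no representation supported on the support of q: the supremum is ⊤
      have hθ : θ ∉ convexHull ℝ (↑(Ω.filter fun ω => q ω ≠ 0) : Set (Fin n → ℝ)) := by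
        intro hmem
        rw [Finset.convexHull_eq] at hmem
        obtain ⟨w, hw0, hw1, hwc⟩ := hmem
        set S := Ω.filter (fun ω => q ω ≠ 0) with hSdef
        have hSsub : S ⊆ Ω := Finset.filter_subset _ _
        refine hrep ⟨fun ω => if ω ∈ S then w ω else 0, ?_, ?_, ?_, ?_, ?_⟩
        · intro ω
          show (0:ℝ) ≤ if ω ∈ S then w ω else 0
          by_cases h : ω ∈ S
          · rw [if_pos h]; exact hw0 ω h
          · rw [if_neg h]
        · intro ω hω
          show (if ω ∈ S then w ω else 0) = 0
          rw [if_neg (fun h => hω (hSsub h))]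
        · show ∑ ω ∈ Ω, (if ω ∈ S then w ω else 0) = 1
          rw [Finset.sum_ite_mem, Finset.inter_eq_right.2 hSsub]
          exact hw1
        · show ∑ ω ∈ Ω, (if ω ∈ S then w ω else 0) • ω = θ
          have h1 : ∀ ω : Fin n → ℝ, (if ω ∈ S then w ω else 0) • ω
              = if ω ∈ S then w ω • ω else 0 := by
            intro ω
            by_cases h : ω ∈ S
            · rw [if_pos h, if_pos h]
            · rw [if_neg h, if_neg h, zero_smul]
          rw [Finset.sum_congr rfl fun ω _ => h1 ω, Finset.sum_ite_mem,
            Finset.inter_eq_right.2 hSsub]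
          rw [Finset.centerMass_eq_of_sum_1 _ id hw1] at hwc
          exact hwc
        · intro ω hω hq
          show (if ω ∈ S then w ω else 0) = 0
          have hns : ω ∉ S := fun h => absurd hq (Finset.mem_filter.1 h).2
          rw [if_neg hns]
      rw [sup_eq_top_of_not_hull Ω q hq0 hq1 θ hθ]
      exact le_top
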